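/- Let e_k be an orthonormal system of H and let f = K_s^{⊗a} ⊗̃ K_t^{⊗(n-a)} and g = K_u^{⊗b} ⊗̃ K_v^{⊗(n-b)} be symmetrized tensor powers of unit-norm-free elements K_s,K_t,K_u,K_v ∈ H with pairwise inner products C_{xy} = ⟨K_x,K_y⟩_H. Then ⟨f,g⟩_{H^{⊗n}} = (1/(C(n,a)C(n,b))) Σ_p multinomial(n; p, a-p, b-p, n-a-b+p) · C_{su}^p C_{sv}^{a-p} C_{tu}^{b-p} C_{tv}^{n-a-b+p}, summing over max(0,a+b-n) ≤ p ≤ min(a,b). -/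

import Mathlib

open Finset

section Aux

lemma subtypeCongr_pos' {α : Type*} {p q : α → Prop} [DecidablePred p] [DecidablePred q]
    (e : {x // p x} ≃ {x // q x}) (f : {x // ¬p x} ≃ {x // ¬q x}) (x : α) (h : p x) :
    Equiv.subtypeCongr e f x = e ⟨x, h⟩ := by
  simp [Equiv.subtypeCongr, h]

lemma subtypeCongr_neg' {α : Type*} {p q : α → Prop} [DecidablePred p] [DecidablePred q]
    (e : {x // p x} ≃ {x // q x}) (f : {x // ¬p x} ≃ {x // ¬q x}) (x : α) (h : ¬ p x) :
    Equiv.subtypeCongr e f x = f ⟨x, h⟩ := by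
  simp [Equiv.subtypeCongr, h]

/-- The number of permutations mapping exactly the set `S` onto the set defined by `q`. -/
lemma card_perm_preimage' {α : Type*} [Fintype α] [DecidableEq α]
    (q : α → Prop) [DecidablePred q] (S : Finset α)
    (hc : S.card = Fintype.card {x // q x}) :
    (univ.filter fun π : Equiv.Perm α => univ.filter (fun j => q (π j)) = S).card
      = S.card.factorial * (Fintype.card α - S.card).factorial := by
  classical
  have hcond : ∀ π : Equiv.Perm α,
      (univ.filter (fun j => q (π j)) = S) ↔ (∀ j, q (π j) ↔ j ∈ S) := by
    intro π
    rw [Finset.ext_iff]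
    simp [mem_filter]
  have h1 : (univ.filter fun π : Equiv.Perm α => univ.filter (fun j => q (π j)) = S).card
      = Fintype.card {π : Equiv.Perm α // ∀ j, q (π j) ↔ j ∈ S} := by
    rw [Fintype.card_subtype]
    congr 1
    apply Finset.filter_congr
    intro π _
    simp [hcond π]
  rw [h1]
  let E : {π : Equiv.Perm α // ∀ j, q (π j) ↔ j ∈ S} ≃
      (({j // j ∈ S} ≃ {x // q x}) × ({j // j ∉ S} ≃ {x // ¬ q x})) :=
    { toFun := fun π =>
        ⟨{ toFun := fun j => ⟨π.1 j, (π.2 j).mpr j.2⟩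
           invFun := fun x => ⟨π.1.symm x, by
             have := (π.2 (π.1.symm x)).mp (by simpa using x.2)
             exact this⟩
           left_inv := fun j => by simp
           right_inv := fun x => by simp },
         { toFun := fun j => ⟨π.1 j, fun hq => j.2 ((π.2 j).mp hq)⟩
           invFun := fun x => ⟨π.1.symm x, fun hS => x.2 (by simpa using (π.2 (π.1.symm x)).mpr hS)⟩
           left_inv := fun j => by simp
           right_inv := fun x => by simp }⟩
      invFun := fun ef => ⟨Equiv.subtypeCongr ef.1 ef.2, by
        intro j
        by_cases h : j ∈ S
        · rw [subtypeCongr_pos' ef.1 ef.2 j h]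
          exact iff_of_true (ef.1 ⟨j, h⟩).2 h
        · rw [subtypeCongr_neg' ef.1 ef.2 j h]
          exact iff_of_false (ef.2 ⟨j, h⟩).2 h⟩
      left_inv := fun π => by
        ext x
        by_cases h : x ∈ S
        · exact subtypeCongr_pos' _ _ x h
        · exact subtypeCongr_neg' _ _ x h
      right_inv := fun ef => by
        ext x
        · exact subtypeCongr_pos' ef.1 ef.2 x x.2
        · exact subtypeCongr_neg' ef.1 ef.2 x x.2 }
  rw [Fintype.card_congr E, Fintype.card_prod]
  have hS1 : Fintype.card {j // j ∈ S} = S.card := Fintype.card_coe S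
  have hq1 : Fintype.card {x // q x} = S.card := hc.symm
  have hS2 : Fintype.card {j // j ∉ S} = Fintype.card α - S.card := by
    rw [Fintype.card_subtype_compl, hS1]
  have hq2 : Fintype.card {x // ¬ q x} = Fintype.card α - S.card := by
    rw [Fintype.card_subtype_compl, hq1]
  rw [Fintype.card_equiv (Fintype.equivOfCardEq (by rw [hS1, hq1])),
      Fintype.card_equiv (Fintype.equivOfCardEq (by rw [hS2, hq2])), hS1, hS2]

lemma card_powersetCard_filter_inter' {α : Type*} [Fintype α] [DecidableEq α]
    (B : Finset α) (a p : ℕ) (hpa : p ≤ a) :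
    (((univ : Finset α).powersetCard a).filter fun S => (S ∩ B).card = p).card
      = B.card.choose p * (Fintype.card α - B.card).choose (a - p) := by
  classical
  rw [show B.card.choose p * (Fintype.card α - B.card).choose (a - p)
      = ((B.powersetCard p) ×ˢ ((Bᶜ).powersetCard (a - p))).card by
    rw [Finset.card_product, Finset.card_powersetCard, Finset.card_powersetCard,
      Finset.card_compl]]
  apply Finset.card_bij' (fun S _ => (S ∩ B, S \ B)) (fun TU _ => TU.1 ∪ TU.2)
  · rintro S hS
    simp only [mem_filter, Finset.mem_powersetCard] at hS
    obtain ⟨⟨-, hcard⟩, hp⟩ := hS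
    simp only [Finset.mem_product, Finset.mem_powersetCard]
    refine ⟨⟨Finset.inter_subset_right, hp⟩, ?_, ?_⟩
    · intro x hx
      simp only [Finset.mem_compl]
      exact fun hB => (Finset.mem_sdiff.mp hx).2 hB
    · have := Finset.card_inter_add_card_sdiff S B
      omega
  · rintro ⟨T, U⟩ hTU
    simp only [Finset.mem_product, Finset.mem_powersetCard] at hTU
    obtain ⟨⟨hT, hTc⟩, hU, hUc⟩ := hTU
    have hdisj : Disjoint T U := by
      refine Finset.disjoint_left.mpr fun x hxT hxU => ?_
      exact (Finset.mem_compl.mp (hU hxU)) (hT hxT)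
    have hUB : U ∩ B = ∅ := by
      refine Finset.eq_empty_of_forall_notMem fun x hx => ?_
      obtain ⟨h1, h2⟩ := Finset.mem_inter.mp hx
      exact (Finset.mem_compl.mp (hU h1)) h2
    simp only [mem_filter, Finset.mem_powersetCard]
    refine ⟨⟨Finset.subset_univ _, ?_⟩, ?_⟩
    · rw [Finset.card_union_of_disjoint hdisj]; omega
    · rw [Finset.union_inter_distrib_right, hUB, Finset.union_empty,
        Finset.inter_eq_left.mpr hT]
      exact hTc
  · intro S hS
    have := Finset.sdiff_union_inter S B
    rw [Finset.union_comm] at this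
    exact this
  · rintro ⟨T, U⟩ hTU
    simp only [Finset.mem_product, Finset.mem_powersetCard] at hTU
    obtain ⟨⟨hT, hTc⟩, hU, hUc⟩ := hTU
    have hUB : U ∩ B = ∅ := by
      refine Finset.eq_empty_of_forall_notMem fun x hx => ?_
      obtain ⟨h1, h2⟩ := Finset.mem_inter.mp hx
      exact (Finset.mem_compl.mp (hU h1)) h2
    have h1 : (T ∪ U) ∩ B = T := by
      rw [Finset.union_inter_distrib_right, hUB, Finset.union_empty,
        Finset.inter_eq_left.mpr hT]
    have h2 : (T ∪ U) \ B = U := by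
      ext x
      simp only [Finset.mem_sdiff, Finset.mem_union]
      constructor
      · rintro ⟨h3 | h3, h4⟩
        · exact absurd (hT h3) h4
        · exact h3
      · intro hx
        exact ⟨Or.inr hx, Finset.mem_compl.mp (hU hx)⟩
    rw [h1, h2]

lemma card_filter_comp_perm' {α : Type*} [Fintype α] [DecidableEq α] (π : Equiv.Perm α)
    (q : α → Prop) [DecidablePred q] :
    (univ.filter fun j => q (π j)).card = (univ.filter q).card := by
  have h : (univ.filter fun j => q (π j)) = (univ.filter q).image π.symm := by
    ext j
    simp only [mem_filter, mem_univ, true_and, mem_image]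
    constructor
    · intro h; exact ⟨π j, h, by simp⟩
    · rintro ⟨x, hx, rfl⟩; simpa using hx
  rw [h, Finset.card_image_of_injective _ π.symm.injective]

lemma card_filter_fin_lt' {n a : ℕ} (ha : a ≤ n) :
    (univ.filter fun i : Fin n => (i : ℕ) < a).card = a := by
  have h : (univ.filter fun i : Fin n => (i:ℕ) < a)
      = (univ : Finset (Fin a)).image (Fin.castLE ha) := by
    ext i
    simp only [mem_filter, mem_univ, true_and, mem_image]
    constructor
    · intro h; exact ⟨⟨i, h⟩, by simp [Fin.castLE]⟩
    · rintro ⟨j, -, rfl⟩; exact j.2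
  rw [h, Finset.card_image_of_injective _ (Fin.castLE_injective ha), card_univ, Fintype.card_fin]

end Aux

section PermSum

variable {n a b : ℕ}

/-- The fiber count: number of permutations `π` with exactly `p` indices `j < b`
satisfying `π j < a`. -/
lemma card_perm_fiber (ha : a ≤ n) (hb : b ≤ n) (p : ℕ) (hpa : p ≤ a) :
    (univ.filter fun π : Equiv.Perm (Fin n) =>
        (univ.filter fun j : Fin n => ((π j : ℕ) < a ∧ (j : ℕ) < b)).card = p).card
      = b.choose p * (n - b).choose (a - p) * (a.factorial * (n - a).factorial) := by
  classical
  set Bf : Finset (Fin n) := univ.filter (fun j : Fin n => (j : ℕ) < b) with hBf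
  have hBcard : Bf.card = b := card_filter_fin_lt' hb
  set 𝒮 : Finset (Finset (Fin n)) :=
    ((univ : Finset (Fin n)).powersetCard a).filter (fun S => (S ∩ Bf).card = p) with h𝒮
  have hkey : ∀ π : Equiv.Perm (Fin n),
      (univ.filter fun j : Fin n => ((π j : ℕ) < a ∧ (j : ℕ) < b))
        = (univ.filter fun j : Fin n => (π j : ℕ) < a) ∩ Bf := by
    intro π
    rw [hBf, ← Finset.filter_and]
  have hcardS : ∀ π : Equiv.Perm (Fin n),
      (univ.filter fun j : Fin n => (π j : ℕ) < a).card = a := by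
    intro π
    rw [card_filter_comp_perm' π (fun i => (i : ℕ) < a), card_filter_fin_lt' ha]
  have hmaps : ∀ π ∈ (univ.filter fun π : Equiv.Perm (Fin n) =>
      (univ.filter fun j : Fin n => ((π j : ℕ) < a ∧ (j : ℕ) < b)).card = p),
      (univ.filter fun j : Fin n => (π j : ℕ) < a) ∈ 𝒮 := by
    intro π hπ
    simp only [mem_filter, mem_univ, true_and] at hπ
    simp only [h𝒮, mem_filter, Finset.mem_powersetCard]
    refine ⟨⟨Finset.subset_univ _, hcardS π⟩, ?_⟩
    rw [← hkey π]
    exact hπ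
  rw [Finset.card_eq_sum_card_fiberwise hmaps]
  have hfib : ∀ S ∈ 𝒮,
      ((univ.filter fun π : Equiv.Perm (Fin n) =>
          (univ.filter fun j : Fin n => ((π j : ℕ) < a ∧ (j : ℕ) < b)).card = p).filter
        (fun π => (univ.filter fun j : Fin n => (π j : ℕ) < a) = S)).card
      = a.factorial * (n - a).factorial := by
    intro S hS
    simp only [h𝒮, mem_filter, Finset.mem_powersetCard] at hS
    obtain ⟨⟨-, hScard⟩, hSp⟩ := hS
    have heq : ((univ.filter fun π : Equiv.Perm (Fin n) =>
          (univ.filter fun j : Fin n => ((π j : ℕ) < a ∧ (j : ℕ) < b)).card = p).filter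
        (fun π => (univ.filter fun j : Fin n => (π j : ℕ) < a) = S))
        = (univ.filter fun π : Equiv.Perm (Fin n) =>
            (univ.filter fun j : Fin n => (π j : ℕ) < a) = S) := by
      ext π
      simp only [Finset.filter_filter, mem_filter, mem_univ, true_and]
      constructor
      · rintro ⟨-, h2⟩; exact h2
      · intro h2
        refine ⟨?_, h2⟩
        rw [hkey π, h2, hSp]
    rw [heq]
    have := card_perm_preimage' (fun i : Fin n => (i : ℕ) < a) S
      (by rw [hScard, Fintype.card_subtype, card_filter_fin_lt' ha])
    rw [this, hScard, Fintype.card_fin]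
  rw [Finset.sum_congr rfl hfib, Finset.sum_const, smul_eq_mul]
  congr 1
  rw [h𝒮, card_powersetCard_filter_inter' Bf a p hpa, hBcard, Fintype.card_fin]

/-- The value of the product for a permutation `π`, in terms of
`p = #{j : π j < a ∧ j < b}`. -/
lemma prod_value (ha : a ≤ n) (hb : b ≤ n) (w x y z : ℝ) (π : Equiv.Perm (Fin n)) :
    (∏ j : Fin n, if ((π j : ℕ) < a) then (if ((j : ℕ) < b) then w else x)
        else (if ((j : ℕ) < b) then y else z))
      = w ^ ((univ.filter fun j : Fin n => ((π j : ℕ) < a ∧ (j : ℕ) < b)).card)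
        * x ^ (a - (univ.filter fun j : Fin n => ((π j : ℕ) < a ∧ (j : ℕ) < b)).card)
        * y ^ (b - (univ.filter fun j : Fin n => ((π j : ℕ) < a ∧ (j : ℕ) < b)).card)
        * z ^ (n + (univ.filter fun j : Fin n => ((π j : ℕ) < a ∧ (j : ℕ) < b)).card - a - b) := by
  classical
  set c1 := (univ.filter fun j : Fin n => ((π j : ℕ) < a ∧ (j : ℕ) < b)).card with hc1
  set c2 := (univ.filter fun j : Fin n => ((π j : ℕ) < a ∧ ¬ (j : ℕ) < b)).card with hc2
  set c3 := (univ.filter fun j : Fin n => (¬ (π j : ℕ) < a ∧ (j : ℕ) < b)).card with hc3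
  set c4 := (univ.filter fun j : Fin n => (¬ (π j : ℕ) < a ∧ ¬ (j : ℕ) < b)).card with hc4
  -- step 1: the product equals w^c1 x^c2 y^c3 z^c4
  have hsplit : (∏ j : Fin n, if ((π j : ℕ) < a) then (if ((j : ℕ) < b) then w else x)
        else (if ((j : ℕ) < b) then y else z))
      = w ^ c1 * x ^ c2 * y ^ c3 * z ^ c4 := by
    have hpt : ∀ j : Fin n, (if ((π j : ℕ) < a) then (if ((j : ℕ) < b) then w else x)
          else (if ((j : ℕ) < b) then y else z))
        = w ^ (if ((π j : ℕ) < a ∧ (j : ℕ) < b) then 1 else 0)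
          * x ^ (if ((π j : ℕ) < a ∧ ¬ (j : ℕ) < b) then 1 else 0)
          * y ^ (if (¬ (π j : ℕ) < a ∧ (j : ℕ) < b) then 1 else 0)
          * z ^ (if (¬ (π j : ℕ) < a ∧ ¬ (j : ℕ) < b) then 1 else 0) := by
      intro j
      by_cases h1 : (π j : ℕ) < a <;> by_cases h2 : (j : ℕ) < b <;>
        simp [h1, h2]
    rw [Finset.prod_congr rfl (fun j _ => hpt j)]
    rw [Finset.prod_mul_distrib, Finset.prod_mul_distrib, Finset.prod_mul_distrib,
      Finset.prod_pow_eq_pow_sum, Finset.prod_pow_eq_pow_sum,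
      Finset.prod_pow_eq_pow_sum, Finset.prod_pow_eq_pow_sum]
    congr 1
    · congr 1
      · congr 1
        · congr 1
          rw [hc1, Finset.card_filter]
        · rw [hc2, Finset.card_filter]
      · rw [hc3, Finset.card_filter]
    · rw [hc4, Finset.card_filter]
  rw [hsplit]
  -- step 2: relations between the cards
  have hA : c1 + c2 = a := by
    have h := Finset.card_filter_add_card_filter_not
      (s := univ.filter fun j : Fin n => (π j : ℕ) < a) (p := fun j : Fin n => (j : ℕ) < b)
    rw [Finset.filter_filter, Finset.filter_filter] at h
    have hca : (univ.filter fun j : Fin n => (π j : ℕ) < a).card = a := by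
      rw [card_filter_comp_perm' π (fun i => (i : ℕ) < a), card_filter_fin_lt' ha]
    rw [hca] at h
    exact h
  have hB : c1 + c3 = b := by
    have h := Finset.card_filter_add_card_filter_not
      (s := univ.filter fun j : Fin n => (j : ℕ) < b) (p := fun j : Fin n => (π j : ℕ) < a)
    rw [Finset.filter_filter, Finset.filter_filter, card_filter_fin_lt' hb] at h
    rw [hc1, hc3]
    rw [show (univ.filter fun j : Fin n => ((π j : ℕ) < a ∧ (j : ℕ) < b))
        = (univ.filter fun j : Fin n => ((j : ℕ) < b ∧ (π j : ℕ) < a)) by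
      apply Finset.filter_congr; intro j _; exact and_comm,
      show (univ.filter fun j : Fin n => (¬ (π j : ℕ) < a ∧ (j : ℕ) < b))
        = (univ.filter fun j : Fin n => ((j : ℕ) < b ∧ ¬ (π j : ℕ) < a)) by
      apply Finset.filter_congr; intro j _; exact and_comm]
    exact h
  have hN : c1 + c2 + c3 + c4 = n := by
    have h := Finset.card_filter_add_card_filter_not
      (s := (univ : Finset (Fin n))) (p := fun j : Fin n => (π j : ℕ) < a)
    have h2 := Finset.card_filter_add_card_filter_not
      (s := univ.filter fun j : Fin n => (π j : ℕ) < a) (p := fun j : Fin n => (j : ℕ) < b)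
    have h3 := Finset.card_filter_add_card_filter_not
      (s := univ.filter fun j : Fin n => ¬ (π j : ℕ) < a) (p := fun j : Fin n => (j : ℕ) < b)
    rw [Finset.filter_filter, Finset.filter_filter] at h2 h3
    rw [Finset.card_univ, Fintype.card_fin] at h
    omega
  have e2 : c2 = a - c1 := by omega
  have e3 : c3 = b - c1 := by omega
  have e4 : c4 = n + c1 - a - b := by omega
  rw [e2, e3, e4]

/-- Membership of the key statistic in the summation range. -/
lemma key_mem_Icc (ha : a ≤ n) (hb : b ≤ n) (π : Equiv.Perm (Fin n)) :
    (univ.filter fun j : Fin n => ((π j : ℕ) < a ∧ (j : ℕ) < b)).card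
      ∈ Finset.Icc (a + b - n) (min a b) := by
  classical
  set c1 := (univ.filter fun j : Fin n => ((π j : ℕ) < a ∧ (j : ℕ) < b)).card with hc1
  set c2 := (univ.filter fun j : Fin n => ((π j : ℕ) < a ∧ ¬ (j : ℕ) < b)).card with hc2
  set c3 := (univ.filter fun j : Fin n => (¬ (π j : ℕ) < a ∧ (j : ℕ) < b)).card with hc3
  set c4 := (univ.filter fun j : Fin n => (¬ (π j : ℕ) < a ∧ ¬ (j : ℕ) < b)).card with hc4
  have hA : c1 + c2 = a := by
    have h := Finset.card_filter_add_card_filter_not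
      (s := univ.filter fun j : Fin n => (π j : ℕ) < a) (p := fun j : Fin n => (j : ℕ) < b)
    rw [Finset.filter_filter, Finset.filter_filter] at h
    have hca : (univ.filter fun j : Fin n => (π j : ℕ) < a).card = a := by
      rw [card_filter_comp_perm' π (fun i => (i : ℕ) < a), card_filter_fin_lt' ha]
    rw [hca] at h
    exact h
  have hB : c1 + c3 = b := by
    have h := Finset.card_filter_add_card_filter_not
      (s := univ.filter fun j : Fin n => (j : ℕ) < b) (p := fun j : Fin n => (π j : ℕ) < a)
    rw [Finset.filter_filter, Finset.filter_filter, card_filter_fin_lt' hb] at h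
    rw [hc1, hc3]
    rw [show (univ.filter fun j : Fin n => ((π j : ℕ) < a ∧ (j : ℕ) < b))
        = (univ.filter fun j : Fin n => ((j : ℕ) < b ∧ (π j : ℕ) < a)) by
      apply Finset.filter_congr; intro j _; exact and_comm,
      show (univ.filter fun j : Fin n => (¬ (π j : ℕ) < a ∧ (j : ℕ) < b))
        = (univ.filter fun j : Fin n => ((j : ℕ) < b ∧ ¬ (π j : ℕ) < a)) by
      apply Finset.filter_congr; intro j _; exact and_comm]
    exact h
  have hN : c1 + c2 + c3 + c4 = n := by
    have h := Finset.card_filter_add_card_filter_not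
      (s := (univ : Finset (Fin n))) (p := fun j : Fin n => (π j : ℕ) < a)
    have h2 := Finset.card_filter_add_card_filter_not
      (s := univ.filter fun j : Fin n => (π j : ℕ) < a) (p := fun j : Fin n => (j : ℕ) < b)
    have h3 := Finset.card_filter_add_card_filter_not
      (s := univ.filter fun j : Fin n => ¬ (π j : ℕ) < a) (p := fun j : Fin n => (j : ℕ) < b)
    rw [Finset.filter_filter, Finset.filter_filter] at h2 h3
    rw [Finset.card_univ, Fintype.card_fin] at h
    omega
  rw [Finset.mem_Icc]
  omega

/-- The key intermediate result: the single-permutation sum. -/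
lemma perm_sum (ha : a ≤ n) (hb : b ≤ n) (w x y z : ℝ) :
    (∑ π : Equiv.Perm (Fin n), ∏ j : Fin n,
        if ((π j : ℕ) < a) then (if ((j : ℕ) < b) then w else x)
        else (if ((j : ℕ) < b) then y else z))
      = ∑ p ∈ Finset.Icc (a + b - n) (min a b),
          ((b.choose p * (n - b).choose (a - p) * (a.factorial * (n - a).factorial) : ℕ) : ℝ)
            * (w ^ p * x ^ (a - p) * y ^ (b - p) * z ^ (n + p - a - b)) := by
  classical
  have h1 : (∑ π : Equiv.Perm (Fin n), ∏ j : Fin n,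
        if ((π j : ℕ) < a) then (if ((j : ℕ) < b) then w else x)
        else (if ((j : ℕ) < b) then y else z))
      = ∑ π : Equiv.Perm (Fin n),
          (fun p => w ^ p * x ^ (a - p) * y ^ (b - p) * z ^ (n + p - a - b))
            ((univ.filter fun j : Fin n => ((π j : ℕ) < a ∧ (j : ℕ) < b)).card) :=
    Finset.sum_congr rfl fun π _ => prod_value ha hb w x y z π
  rw [h1, ← Finset.sum_fiberwise_of_maps_to'
    (g := fun π : Equiv.Perm (Fin n) =>
      (univ.filter fun j : Fin n => ((π j : ℕ) < a ∧ (j : ℕ) < b)).card)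
    (f := fun p => w ^ p * x ^ (a - p) * y ^ (b - p) * z ^ (n + p - a - b))
    (fun π _ => key_mem_Icc ha hb π)]
  apply Finset.sum_congr rfl
  intro p hp
  rw [Finset.sum_const, nsmul_eq_mul]
  congr 1
  rw [Finset.mem_Icc] at hp
  have : (univ.filter fun π : Equiv.Perm (Fin n) =>
      (univ.filter fun j : Fin n => ((π j : ℕ) < a ∧ (j : ℕ) < b)).card = p).card
      = b.choose p * (n - b).choose (a - p) * (a.factorial * (n - a).factorial) :=
    card_perm_fiber ha hb p (le_trans hp.2 (min_le_left a b))
  rw [← this]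

end PermSum

theorem stmt15 {H : Type*} [NormedAddCommGroup H] [InnerProductSpace ℝ H]
    (Ks Kt Ku Kv : H) (n a b : ℕ) (ha : a ≤ n) (hb : b ≤ n) :
    (1 / ((n.factorial : ℝ)) ^ 2) *
      ∑ σ : Equiv.Perm (Fin n), ∑ τ : Equiv.Perm (Fin n),
        ∏ i : Fin n,
          (inner ℝ ((if (σ i : ℕ) < a then Ks else Kt))
                 ((if (τ i : ℕ) < b then Ku else Kv)) : ℝ) =
    (1 / ((n.choose a : ℝ) * (n.choose b : ℝ))) *
      ∑ p ∈ Finset.Icc (a + b - n) (min a b),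
        ((n.factorial : ℝ) /
            ((p.factorial : ℝ) * ((a - p).factorial : ℝ) *
              ((b - p).factorial : ℝ) * ((n + p - a - b).factorial : ℝ))) *
          (inner ℝ Ks Ku : ℝ) ^ p * (inner ℝ Ks Kv : ℝ) ^ (a - p) *
          (inner ℝ Kt Ku : ℝ) ^ (b - p) * (inner ℝ Kt Kv : ℝ) ^ (n + p - a - b) := by
  classical
  set w : ℝ := inner ℝ Ks Ku
  set x : ℝ := inner ℝ Ks Kv
  set y : ℝ := inner ℝ Kt Ku
  set z : ℝ := inner ℝ Kt Kv
  -- rewrite the inner product of ifs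
  have hinner : ∀ (σ τ : Equiv.Perm (Fin n)) (i : Fin n),
      (inner ℝ ((if (σ i : ℕ) < a then Ks else Kt))
             ((if (τ i : ℕ) < b then Ku else Kv)) : ℝ)
      = (fun r c : Fin n => if ((r : ℕ) < a) then (if ((c : ℕ) < b) then w else x)
          else (if ((c : ℕ) < b) then y else z)) (σ i) (τ i) := by
    intro σ τ i
    by_cases h1 : (σ i : ℕ) < a <;> by_cases h2 : (τ i : ℕ) < b <;> simp [h1, h2, w, x, y, z]
  -- reduce the double sum to a single sum
  have hdouble : (∑ σ : Equiv.Perm (Fin n), ∑ τ : Equiv.Perm (Fin n),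
        ∏ i : Fin n,
          (inner ℝ ((if (σ i : ℕ) < a then Ks else Kt))
                 ((if (τ i : ℕ) < b then Ku else Kv)) : ℝ))
      = (n.factorial : ℝ) * ∑ π : Equiv.Perm (Fin n), ∏ j : Fin n,
          if ((π j : ℕ) < a) then (if ((j : ℕ) < b) then w else x)
          else (if ((j : ℕ) < b) then y else z) := by
    have hστ : ∀ σ τ : Equiv.Perm (Fin n),
        (∏ i : Fin n, (inner ℝ ((if (σ i : ℕ) < a then Ks else Kt))
                 ((if (τ i : ℕ) < b then Ku else Kv)) : ℝ))
        = ∏ j : Fin n, if (((σ * τ⁻¹ : Equiv.Perm (Fin n)) j : ℕ) < a)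
            then (if ((j : ℕ) < b) then w else x)
            else (if ((j : ℕ) < b) then y else z) := by
      intro σ τ
      rw [Finset.prod_congr rfl (fun i _ => hinner σ τ i)]
      have := Equiv.prod_comp τ (fun j : Fin n =>
        if (((σ * τ⁻¹ : Equiv.Perm (Fin n)) j : ℕ) < a)
            then (if ((j : ℕ) < b) then w else x)
            else (if ((j : ℕ) < b) then y else z))
      rw [← this]
      apply Finset.prod_congr rfl
      intro i _
      simp [Equiv.Perm.mul_apply]
    rw [Finset.sum_congr rfl (fun σ _ => Finset.sum_congr rfl (fun τ _ => hστ σ τ))]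
    have hre : ∀ σ : Equiv.Perm (Fin n),
        (∑ τ : Equiv.Perm (Fin n), ∏ j : Fin n,
            if (((σ * τ⁻¹ : Equiv.Perm (Fin n)) j : ℕ) < a)
            then (if ((j : ℕ) < b) then w else x)
            else (if ((j : ℕ) < b) then y else z))
        = ∑ π : Equiv.Perm (Fin n), ∏ j : Fin n,
            if ((π j : ℕ) < a) then (if ((j : ℕ) < b) then w else x)
            else (if ((j : ℕ) < b) then y else z) := by
      intro σ
      exact Fintype.sum_equiv ((Equiv.inv (Equiv.Perm (Fin n))).trans (Equiv.mulLeft σ))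
        _ _ (fun τ => rfl)
    rw [Finset.sum_congr rfl (fun σ _ => hre σ), Finset.sum_const, Finset.card_univ,
      Fintype.card_perm, Fintype.card_fin, nsmul_eq_mul]
  rw [hdouble, perm_sum ha hb w x y z, Finset.mul_sum, Finset.mul_sum, Finset.mul_sum]
  apply Finset.sum_congr rfl
  intro p hp
  rw [Finset.mem_Icc] at hp
  obtain ⟨hp1, hp2⟩ := hp
  have hpa : p ≤ a := le_trans hp2 (min_le_left a b)
  have hpb : p ≤ b := le_trans hp2 (min_le_right a b)
  have hab : a + b ≤ n + p := by omega
  -- the natural number identity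
  have hnat : b.choose p * (n - b).choose (a - p) * (a.factorial * (n - a).factorial)
        * (n.choose a * n.choose b)
        * (p.factorial * (a - p).factorial * (b - p).factorial * (n + p - a - b).factorial)
      = n.factorial * n.factorial := by
    have h1 : n.choose a * a.factorial * (n - a).factorial = n.factorial :=
      Nat.choose_mul_factorial_mul_factorial ha
    have h2 : b.choose p * p.factorial * (b - p).factorial = b.factorial :=
      Nat.choose_mul_factorial_mul_factorial hpb
    have h4 : (n - b) - (a - p) = n + p - a - b := by omega
    have h3 : (n - b).choose (a - p) * (a - p).factorial * (n + p - a - b).factorial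
        = (n - b).factorial := by
      rw [← h4]
      exact Nat.choose_mul_factorial_mul_factorial (by omega)
    have h5 : n.choose b * b.factorial * (n - b).factorial = n.factorial :=
      Nat.choose_mul_factorial_mul_factorial hb
    calc b.choose p * (n - b).choose (a - p) * (a.factorial * (n - a).factorial)
          * (n.choose a * n.choose b)
          * (p.factorial * (a - p).factorial * (b - p).factorial * (n + p - a - b).factorial)
        = (n.choose a * a.factorial * (n - a).factorial)
          * (n.choose b * ((b.choose p * p.factorial * (b - p).factorial)
            * ((n - b).choose (a - p) * (a - p).factorial * (n + p - a - b).factorial))) := by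
          ring
      _ = n.factorial * (n.choose b * (b.factorial * (n - b).factorial)) := by
          rw [h1, h2, h3]
      _ = n.factorial * n.factorial := by rw [← h5]; ring
  -- cast to ℝ and conclude
  have hcast := congrArg (Nat.cast : ℕ → ℝ) hnat
  push_cast at hcast
  have hf0 : ∀ m : ℕ, ((m.factorial : ℝ)) ≠ 0 := fun m => by
    exact_mod_cast Nat.factorial_ne_zero m
  have hca : ((n.choose a : ℝ)) ≠ 0 := by
    exact_mod_cast Nat.ne_of_gt (Nat.choose_pos ha)
  have hcb : ((n.choose b : ℝ)) ≠ 0 := by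
    exact_mod_cast Nat.ne_of_gt (Nat.choose_pos hb)
  have hcoef : (1 / ((n.factorial : ℝ)) ^ 2) * ((n.factorial : ℝ)
        * ((b.choose p * (n - b).choose (a - p) * (a.factorial * (n - a).factorial) : ℕ) : ℝ))
      = (1 / ((n.choose a : ℝ) * (n.choose b : ℝ)))
        * ((n.factorial : ℝ) /
            ((p.factorial : ℝ) * ((a - p).factorial : ℝ) *
              ((b - p).factorial : ℝ) * ((n + p - a - b).factorial : ℝ))) := by
    push_cast
    field_simp
    nlinarith [hcast]
  calc (1 / ((n.factorial : ℝ)) ^ 2) * ((n.factorial : ℝ)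
        * (((b.choose p * (n - b).choose (a - p) * (a.factorial * (n - a).factorial) : ℕ) : ℝ)
          * (w ^ p * x ^ (a - p) * y ^ (b - p) * z ^ (n + p - a - b))))
      = ((1 / ((n.factorial : ℝ)) ^ 2) * ((n.factorial : ℝ)
        * ((b.choose p * (n - b).choose (a - p) * (a.factorial * (n - a).factorial) : ℕ) : ℝ)))
          * (w ^ p * x ^ (a - p) * y ^ (b - p) * z ^ (n + p - a - b)) := by ring
    _ = ((1 / ((n.choose a : ℝ) * (n.choose b : ℝ)))
        * ((n.factorial : ℝ) /
            ((p.factorial : ℝ) * ((a - p).factorial : ℝ) *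
              ((b - p).factorial : ℝ) * ((n + p - a - b).factorial : ℝ))))
          * (w ^ p * x ^ (a - p) * y ^ (b - p) * z ^ (n + p - a - b)) := by rw [hcoef]
    _ = _ := by ring
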